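/- Let a < b be real numbers and let f, g : [a,b] → ℝ be functions with f ≥ 0 and g ≥ 0, such that g is continuously differentiable, f is monotone increasing (nondecreasing), the set I_reg ⊆ [a,b] of points at which f is differentiable is open, and at every point τ₀ ∈ I_reg the product function τ ↦ g(τ)·f(τ) has derivative (g·f)'(τ₀) ≥ 0. Then τ ↦ g(τ)·f(τ) is monotone increasing (nondecreasing) on [a,b]. -/

import Mathlib

open Set MeasureTheory Filter

set_option maxHeartbeats 2000000 in
/-- **Lemma (monotonicity of products).**  Let `a < b` and `f, g : [a,b] → ℝ` with
`f ≥ 0`, `g ≥ 0`, `g` continuously differentiable, `f` monotone increasing, the set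
`I_reg ⊆ [a,b]` of points at which `f` is differentiable open, and `(g·f)'(τ₀) ≥ 0`
at every `τ₀ ∈ I_reg`.  Then `τ ↦ g(τ)·f(τ)` is monotone increasing on `[a,b]`. -/
theorem stmt0 (a b : ℝ) (hab : a < b) (f g : ℝ → ℝ)
    (hf_nonneg : ∀ τ ∈ Set.Icc a b, 0 ≤ f τ)
    (hg_nonneg : ∀ τ ∈ Set.Icc a b, 0 ≤ g τ)
    (hgC1 : ContDiffOn ℝ 1 g (Set.Icc a b))
    (hf_mono : MonotoneOn f (Set.Icc a b))
    (hIreg_open : IsOpen {τ : ℝ | τ ∈ Set.Icc a b ∧ DifferentiableAt ℝ f τ})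
    (hderiv_nonneg : ∀ τ₀ ∈ {τ : ℝ | τ ∈ Set.Icc a b ∧ DifferentiableAt ℝ f τ},
      0 ≤ deriv (fun τ => g τ * f τ) τ₀) :
    MonotoneOn (fun τ => g τ * f τ) (Set.Icc a b) := by
  have hab' : a ≤ b := hab.le
  set h : ℝ → ℝ := fun τ => g τ * f τ with hh
  set Ireg : Set ℝ := {τ : ℝ | τ ∈ Set.Icc a b ∧ DifferentiableAt ℝ f τ} with hIreg
  -- Lipschitz bound for g on [a,b]
  obtain ⟨C, hC⟩ := isCompact_Icc.exists_bound_of_continuousOn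
      (hgC1.continuousOn_derivWithin (uniqueDiffOn_Icc hab) le_rfl)
  have hC0 : 0 ≤ C := le_trans (norm_nonneg _) (hC a (left_mem_Icc.2 hab'))
  have hgLip : ∀ u ∈ Set.Icc a b, ∀ v ∈ Set.Icc a b, |g v - g u| ≤ C * |v - u| := by
    intro u hu v hv
    have := Convex.norm_image_sub_le_of_norm_derivWithin_le
      (hgC1.differentiableOn one_ne_zero) hC (convex_Icc a b) hu hv
    simpa [Real.norm_eq_abs] using this
  -- Extension of f, monotone on all of ℝ
  set fE : ℝ → ℝ := fun t => f (max a (min b t)) with hfE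
  have hclamp : ∀ t, max a (min b t) ∈ Set.Icc a b := by
    intro t
    constructor
    · exact le_max_left _ _
    · exact max_le hab' (min_le_left _ _)
  have hfE_mono : Monotone fE := by
    intro t t' htt'
    exact hf_mono (hclamp t) (hclamp t')
      (max_le_max le_rfl (min_le_min le_rfl htt'))
  -- The set of "bad" points is null
  set N : Set ℝ := (Set.Icc a b \ Ireg) ∪ {a, b} with hN
  have hNnull : volume N = 0 := by
    have hsub : N ⊆ {a, b} ∪ {τ : ℝ | ¬ DifferentiableAt ℝ fE τ} := by
      rintro τ (⟨hτI, hτnot⟩ | hτab)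
      · by_cases hτa : τ = a
        · exact Or.inl (Or.inl hτa)
        by_cases hτb : τ = b
        · exact Or.inl (Or.inr hτb)
        have hτoo : τ ∈ Set.Ioo a b := ⟨lt_of_le_of_ne hτI.1 (Ne.symm hτa),
          lt_of_le_of_ne hτI.2 hτb⟩
        right
        intro hdiff
        apply hτnot
        refine ⟨hτI, ?_⟩
        have heq : fE =ᶠ[nhds τ] f := by
          filter_upwards [Ioo_mem_nhds hτoo.1 hτoo.2] with t ht
          simp only [hfE]
          rw [min_eq_right ht.2.le, max_eq_right ht.1.le]
        exact heq.differentiableAt_iff.mp hdiff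
      · exact Or.inl hτab
    refine measure_mono_null hsub ?_
    rw [measure_union_null_iff]
    constructor
    · exact ((Set.finite_singleton b).insert a).measure_zero volume
    · exact ae_iff.mp hfE_mono.ae_differentiableAt
  -- the key estimate
  have key : ∀ x ∈ Set.Icc a b, ∀ y ∈ Set.Icc a b, x < y → ∀ ε > 0, h x ≤ h y + ε := by
    intro x hx y hy hxy ε hε
    have hIxyI : Set.Icc x y ⊆ Set.Icc a b := Set.Icc_subset_Icc hx.1 hy.2
    set Cf : ℝ := f b with hCf
    have hCf0 : 0 ≤ Cf := hf_nonneg b (right_mem_Icc.2 hab')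
    have hfub : ∀ t ∈ Set.Icc a b, f t ≤ Cf := fun t ht =>
      hf_mono ht (right_mem_Icc.2 hab') ht.2
    set K : ℝ := C * Cf + 1 with hK
    have hK0 : 0 < K := by positivity
    set δ : ℝ := ε / (2 * K) with hδ
    have hδ0 : 0 < δ := by positivity
    set ε' : ℝ := ε / (2 * (y - x)) with hε'
    have hε'0 : 0 < ε' := by
      have : 0 < y - x := by linarith
      positivity
    -- open neighborhood of the bad set of small measure
    obtain ⟨V, hNV, hVopen, hVvol⟩ := Set.exists_isOpen_lt_of_lt N (ENNReal.ofReal δ)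
      (by rw [hNnull]; exact ENNReal.ofReal_pos.2 hδ0)
    have hVfin : volume V ≠ ⊤ := hVvol.trans_le le_top |>.ne
    -- auxiliary function ψ
    set ψ : ℝ → ℝ := fun t => (volume (V ∩ Set.Ioc x t)).toReal with hψ
    have hψfin : ∀ t, volume (V ∩ Set.Ioc x t) ≠ ⊤ := fun t =>
      ((measure_mono Set.inter_subset_left).trans_lt (hVvol.trans_le le_top)).ne
    have hψ0 : ψ x = 0 := by simp [hψ]
    have hψmono : Monotone ψ := by
      intro t t' htt'
      exact ENNReal.toReal_mono (hψfin t')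
        (measure_mono (Set.inter_subset_inter_right _ (Set.Ioc_subset_Ioc le_rfl htt')))
    have hψlt : ∀ t, ψ t < δ := by
      intro t
      have h1 : volume (V ∩ Set.Ioc x t) < ENNReal.ofReal δ :=
        lt_of_le_of_lt (measure_mono Set.inter_subset_left) hVvol
      calc ψ t < (ENNReal.ofReal δ).toReal :=
              ENNReal.toReal_strict_mono ENNReal.ofReal_ne_top h1
        _ = δ := ENNReal.toReal_ofReal hδ0.le
    have hψlip : ∀ t t', t ≤ t' → ψ t' - ψ t ≤ t' - t := by
      intro t t' htt'
      have hsub : V ∩ Set.Ioc x t' ⊆ (V ∩ Set.Ioc x t) ∪ Set.Ioc t t' := by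
        rintro u ⟨huV, hxu, hut'⟩
        by_cases hut : u ≤ t
        · exact Or.inl ⟨huV, hxu, hut⟩
        · exact Or.inr ⟨not_le.1 hut, hut'⟩
      have h1 : volume (V ∩ Set.Ioc x t') ≤ volume (V ∩ Set.Ioc x t) + volume (Set.Ioc t t') :=
        (measure_mono hsub).trans (measure_union_le _ _)
      have h2 : ψ t' ≤ ψ t + (t' - t) := by
        have hfin2 : volume (Set.Ioc t t') ≠ ⊤ := by
          rw [Real.volume_Ioc]; exact ENNReal.ofReal_ne_top
        calc ψ t' ≤ (volume (V ∩ Set.Ioc x t) + volume (Set.Ioc t t')).toReal :=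
              ENNReal.toReal_mono (by exact ENNReal.add_ne_top.2 ⟨hψfin t, hfin2⟩) h1
          _ = ψ t + (volume (Set.Ioc t t')).toReal := ENNReal.toReal_add (hψfin t) hfin2
          _ = ψ t + (t' - t) := by rw [Real.volume_Ioc, ENNReal.toReal_ofReal (by linarith)]
      linarith
    have hψcont : Continuous ψ := by
      refine LipschitzWith.continuous (K := 1) (LipschitzWith.of_dist_le_mul ?_)
      intro t t'
      simp only [Real.dist_eq, NNReal.coe_one, one_mul]
      rcases le_total t t' with htt' | htt'
      · rw [abs_sub_comm, abs_of_nonneg (by linarith [hψmono htt']),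
          abs_of_nonpos (by linarith)]
        linarith [hψlip t t' htt']
      · rw [abs_of_nonneg (by linarith [hψmono htt']), abs_of_nonneg (by linarith)]
        exact hψlip t' t htt'
    -- the set A and its supremum
    set A : Set ℝ := {t | t ∈ Set.Icc x y ∧ h x - ε' * (t - x) - K * ψ t ≤ h t} with hA
    have hxA : x ∈ A := by
      refine ⟨left_mem_Icc.2 hxy.le, ?_⟩
      rw [hψ0]; ring_nf; exact le_rfl
    have hAne : A.Nonempty := ⟨x, hxA⟩
    have hAbdd : BddAbove A := ⟨y, fun t ht => ht.1.2⟩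
    set s : ℝ := sSup A with hs
    have hscl : s ∈ closure A := csSup_mem_closure hAne hAbdd
    have hsIxy : s ∈ Set.Icc x y := by
      have : closure A ⊆ Set.Icc x y :=
        closure_minimal (fun t ht => ht.1) isClosed_Icc
      exact this hscl
    have hsI : s ∈ Set.Icc a b := hIxyI hsIxy
    have hsA : s ∈ A := by
      refine ⟨hsIxy, ?_⟩
      -- limit argument using continuity
      set F : ℝ → ℝ := fun t => (g t * f s + ε' * (t - x) + K * ψ t) - h x with hF
      have hFcont : ContinuousOn F (Set.Icc x y) := by
        refine ContinuousOn.sub ?_ continuousOn_const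
        refine ContinuousOn.add (ContinuousOn.add ?_ (by fun_prop)) ?_
        · exact ((hgC1.continuousOn.mono hIxyI).mul continuousOn_const)
        · exact (continuous_const.mul hψcont).continuousOn
      have hclosed : IsClosed (Set.Icc x y ∩ F ⁻¹' Set.Ici 0) :=
        hFcont.preimage_isClosed_of_isClosed isClosed_Icc isClosed_Ici
      have hAsub : A ⊆ Set.Icc x y ∩ F ⁻¹' Set.Ici 0 := by
        intro t ht
        refine ⟨ht.1, ?_⟩
        have hts : t ≤ s := le_csSup hAbdd ht
        have htI : t ∈ Set.Icc a b := hIxyI ht.1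
        have h1 : h t ≤ g t * f s :=
          mul_le_mul_of_nonneg_left (hf_mono htI hsI hts) (hg_nonneg t htI)
        have h2 := ht.2
        simp only [Set.mem_preimage, Set.mem_Ici, hF]
        linarith
      have hsin : s ∈ Set.Icc x y ∩ F ⁻¹' Set.Ici 0 :=
        (closure_minimal hAsub hclosed) hscl
      have := hsin.2
      simp only [Set.mem_preimage, Set.mem_Ici, hF] at this
      have h4 : h x ≤ g s * f s + ε' * (s - x) + K * ψ s := by linarith
      have hhs : h s = g s * f s := rfl
      linarith
    -- s = y
    have hsy : s = y := by
      by_contra hne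
      have hslty : s < y := lt_of_le_of_ne hsIxy.2 hne
      -- find t ∈ A with s < t, contradiction
      have hcontra : ∀ t, t ∈ A → t ≤ s := fun t ht => le_csSup hAbdd ht
      by_cases hsV : s ∈ V
      · -- s in the small open set: use that ψ grows at unit speed there
        obtain ⟨r, hr0, hball⟩ := Metric.isOpen_iff.1 hVopen s hsV
        set t : ℝ := min (s + r / 2) ((s + y) / 2) with ht
        have hst : s < t := lt_min (by linarith) (by linarith)
        have hty : t < y := by
          calc t ≤ (s + y) / 2 := min_le_right _ _
            _ < y := by linarith
        have htr : t ≤ s + r / 2 := min_le_left _ _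
        have hIocV : Set.Ioc s t ⊆ V := by
          intro u hu
          apply hball
          rw [Metric.mem_ball, Real.dist_eq, abs_of_pos (by linarith [hu.1])]
          linarith [hu.2, hu.1]
        have htIxy : t ∈ Set.Icc x y := ⟨le_trans hsIxy.1 hst.le, hty.le⟩
        have htI : t ∈ Set.Icc a b := hIxyI htIxy
        -- ψ t ≥ ψ s + (t - s)
        have hψgrow : ψ s + (t - s) ≤ ψ t := by
          have hdisj : Disjoint (V ∩ Set.Ioc x s) (Set.Ioc s t) :=
            Set.disjoint_of_subset_left Set.inter_subset_right (Set.Ioc_disjoint_Ioc_of_le le_rfl)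
          have hsub : (V ∩ Set.Ioc x s) ∪ Set.Ioc s t ⊆ V ∩ Set.Ioc x t := by
            rintro u (⟨huV, hxu, hus⟩ | hu)
            · exact ⟨huV, hxu, le_trans hus hst.le⟩
            · exact ⟨hIocV hu, lt_of_le_of_lt hsIxy.1 hu.1, hu.2⟩
          have h1 : volume (V ∩ Set.Ioc x s) + volume (Set.Ioc s t)
              ≤ volume (V ∩ Set.Ioc x t) := by
            rw [← measure_union hdisj measurableSet_Ioc]
            exact measure_mono hsub
          have hfin2 : volume (Set.Ioc s t) ≠ ⊤ := by
            rw [Real.volume_Ioc]; exact ENNReal.ofReal_ne_top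
          calc ψ s + (t - s) = (volume (V ∩ Set.Ioc x s) + volume (Set.Ioc s t)).toReal := by
                rw [ENNReal.toReal_add (hψfin s) hfin2, Real.volume_Ioc,
                  ENNReal.toReal_ofReal (by linarith)]
            _ ≤ ψ t := ENNReal.toReal_mono (hψfin t) h1
        -- h t ≥ h s - K * (t - s)
        have hht : h s - K * (t - s) ≤ h t := by
          have h1 : g t * f s ≤ h t :=
            mul_le_mul_of_nonneg_left (hf_mono hsI htI hst.le) (hg_nonneg t htI)
          have h2 : |g t - g s| ≤ C * |t - s| := hgLip s hsI t htI
          have h3 : g s - g t ≤ C * (t - s) := by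
            rw [show |t - s| = t - s from abs_of_nonneg (by linarith)] at h2
            calc g s - g t ≤ |g t - g s| := by
                  rw [abs_sub_comm]; exact le_abs_self _
              _ ≤ C * (t - s) := h2
          have h4 : (g s - g t) * f s ≤ C * (t - s) * Cf := by
            have hfs0 : 0 ≤ f s := hf_nonneg s hsI
            have hfsCf : f s ≤ Cf := hfub s hsI
            nlinarith [mul_nonneg (sub_nonneg.2 h3) hfs0,
              mul_nonneg (mul_nonneg hC0 (sub_nonneg.2 hst.le)) (sub_nonneg.2 hfsCf)]
          have h5 : C * (t - s) * Cf ≤ K * (t - s) := by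
            have : C * Cf ≤ K := by simp only [hK]; linarith
            calc C * (t - s) * Cf = (C * Cf) * (t - s) := by ring
              _ ≤ K * (t - s) := mul_le_mul_of_nonneg_right this (by linarith)
          have : h s - g t * f s = (g s - g t) * f s := by simp only [hh]; ring
          linarith
        have htA : t ∈ A := by
          refine ⟨htIxy, ?_⟩
          have hsA2 := hsA.2
          have hm1 := mul_le_mul_of_nonneg_left hψgrow hK0.le
          have hm2 := mul_nonneg hε'0.le (sub_nonneg.2 hst.le)
          nlinarith
        exact absurd (hcontra t htA) (not_le.2 hst)
      · -- s is a regular point: use the derivative hypothesis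
        have hsN : s ∉ N := fun hsN => hsV (hNV hsN)
        have hsreg : s ∈ Ireg := by
          by_contra hnot
          exact hsN (Or.inl ⟨hsI, hnot⟩)
        have hsa : s ≠ a := fun hsa => hsN (Or.inr (Or.inl hsa))
        have hsb : s ≠ b := fun hsb => hsN (Or.inr (Or.inr hsb))
        have hsoo : s ∈ Set.Ioo a b := ⟨lt_of_le_of_ne hsI.1 (Ne.symm hsa),
          lt_of_le_of_ne hsI.2 hsb⟩
        have hgd : DifferentiableAt ℝ g s :=
          ((hgC1.differentiableOn one_ne_zero) s hsI).differentiableAt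
            (Icc_mem_nhds hsoo.1 hsoo.2)
        have hfd : DifferentiableAt ℝ f s := hsreg.2
        have hhd : HasDerivAt h (deriv h s) s := (hgd.mul hfd).hasDerivAt
        have hd0 : 0 ≤ deriv h s := hderiv_nonneg s hsreg
        have hslope := hasDerivAt_iff_tendsto_slope.1 hhd
        have hev1 : ∀ᶠ t in nhdsWithin s {s}ᶜ, -ε' < slope h s t :=
          hslope (Ioi_mem_nhds (by linarith))
        have hev2 : ∀ᶠ t in nhdsWithin s (Set.Ioi s), -ε' < slope h s t :=
          hev1.filter_mono (nhdsWithin_mono s (fun u hu => ne_of_gt hu))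
        have hev3 : ∀ᶠ t in nhdsWithin s (Set.Ioi s), t ∈ Set.Ioo s y := by
          filter_upwards [Ioo_mem_nhdsGT_of_mem ⟨le_rfl, hslty⟩] with t ht using ht
        obtain ⟨t, hslp, htoo⟩ := (hev2.and hev3).exists
        have hst : s < t := htoo.1
        have hty : t < y := htoo.2
        have htIxy : t ∈ Set.Icc x y := ⟨le_trans hsIxy.1 hst.le, hty.le⟩
        have hslp2 : h s - ε' * (t - s) ≤ h t := by
          rw [slope_def_field] at hslp
          have hts0 : 0 < t - s := by linarith
          have := (lt_div_iff₀ hts0).1 hslp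
          linarith
        have htA : t ∈ A := by
          refine ⟨htIxy, ?_⟩
          have hsA2 := hsA.2
          have hm1 := mul_le_mul_of_nonneg_left (hψmono hst.le) hK0.le
          have hm2 := mul_nonneg hε'0.le (sub_nonneg.2 hst.le)
          nlinarith
        exact absurd (hcontra t htA) (not_le.2 hst)
    -- conclude
    have hyA : y ∈ A := by rw [← hsy]; exact hsA
    have h1 : h x - ε' * (y - x) - K * ψ y ≤ h y := hyA.2
    have hyx0 : y - x ≠ 0 := sub_ne_zero.2 hxy.ne'
    have h2 : ε' * (y - x) = ε / 2 := by
      rw [hε']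
      field_simp
    have h3 : K * ψ y ≤ ε / 2 := by
      have := (hψlt y).le
      calc K * ψ y ≤ K * δ := mul_le_mul_of_nonneg_left this hK0.le
        _ = ε / 2 := by
              have hKne : K ≠ 0 := hK0.ne'
              rw [hδ]
              field_simp
    rw [h2] at h1
    have h4 : h x ≤ h y + ε / 2 + K * ψ y := by linarith
    linarith
  -- finish
  intro x hx y hy hxy
  rcases eq_or_lt_of_le hxy with rfl | hlt
  · exact le_rfl
  · by_contra hcon
    push_neg at hcon
    have := key x hx y hy hlt ((h x - h y) / 2) (by linarith)
    linarith
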